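/- Let W be an admissible Wilson loop diagram with 2 propagators on 6 vertices and let (p,v) be a non-degenerate boundary of W. Then the boundary positroid B(∂_{p,v}W) is a positroid properly contained in B(W), and it is maximal among positroids of rank 2 on {1,…,6} properly contained in B(W); that is, every non-degenerate boundary diagram parametrizes a codimension-one boundary cell of the 6-dimensional cell Σ(W). -/

import Mathlib

/-! Core combinatorial definitions for Wilson loop diagrams with 2 propagators on 6 vertices.
Vertices and edges of the hexagon are labelled by `Fin 6` (cyclically; edge `i` joins
vertices `i` and `i+1`). -/

namespace WLD

/-- Vertices / edges of the hexagon. -/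
abbrev V : Type := Fin 6

/-- The support of a propagator `p = {i, j}` (a pair of edges): `{i, i+1, j, j+1}`. -/
def supp (p : Finset V) : Finset V := p ∪ p.image (· + 1)

/-- Two propagators cross iff their edge pairs interleave in the cyclic order. -/
def Crossing (p q : Finset V) : Prop :=
  ∃ a b c d : V, a < b ∧ b < c ∧ c < d ∧
    ((p = {a, c} ∧ q = {b, d}) ∨ (p = {b, d} ∧ q = {a, c}))

/-- A Wilson loop diagram with 2 propagators on 6 vertices: a set of two distinct
propagators, each of which is a pair of distinct edges. -/
def IsWLD (P : Finset (Finset V)) : Prop :=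
  P.card = 2 ∧ ∀ p ∈ P, p.card = 2

/-- Admissibility: `|V_Q| ≥ |Q| + 3` for every nonempty subset of propagators, and
no two propagators cross. -/
def Admissible (P : Finset (Finset V)) : Prop :=
  IsWLD P ∧
  (∀ Q ⊆ P, Q.Nonempty → Q.card + 3 ≤ (Q.biUnion supp).card) ∧
  (∀ p ∈ P, ∀ q ∈ P, ¬ Crossing p q)

/-- The matrix `C(W)` associated to the (ordered) pair of propagators `(p, q)`,
with real parameters `c` in the support entries and `0` elsewhere. -/
def Cmat (p q : Finset V) (c : Fin 2 → V → ℝ) : Matrix (Fin 2) V ℝ :=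
  Matrix.of fun b a => if a ∈ supp (if b = 0 then p else q) then c b a else 0

/-- The `2×2` minor of a `2×6` matrix on columns `a`, `b`. -/
def mnr (M : Matrix (Fin 2) V ℝ) (a b : V) : ℝ := M 0 a * M 1 b - M 0 b * M 1 a

/-- The positroid `B(W)` of a Wilson loop diagram: the 2-element column sets on which
the minor of `C(W)` is not identically zero (i.e. nonzero for some parameter values). -/
def BW (P : Finset (Finset V)) : Set (Finset V) :=
  { I | ∃ p ∈ P, ∃ q ∈ P, p ≠ q ∧ ∃ a b : V, a < b ∧ I = {a, b} ∧
        ∃ c : Fin 2 → V → ℝ, mnr (Cmat p q c) a b ≠ 0 }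

/-- `M` is totally nonnegative (all `2×2` minors, in the column order, nonnegative). -/
def TNN (M : Matrix (Fin 2) V ℝ) : Prop := ∀ a b : V, a < b → 0 ≤ mnr M a b

/-- The set of nonvanishing maximal minors of `M` is exactly `B`. -/
def IsRep (B : Set (Finset V)) (M : Matrix (Fin 2) V ℝ) : Prop :=
  ∀ a b : V, a < b → (mnr M a b ≠ 0 ↔ ({a, b} : Finset V) ∈ B)

/-- A positroid of rank 2 on the 6 columns: a nonempty collection of 2-element subsets
realizable as the set of nonvanishing maximal minors of a rank-2 totally nonnegative
real `2×6` matrix. -/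
def IsPositroid (B : Set (Finset V)) : Prop :=
  B.Nonempty ∧ (∀ I ∈ B, I.card = 2) ∧
  ∃ M : Matrix (Fin 2) V ℝ, M.rank = 2 ∧ TNN M ∧ IsRep B M

/-- `B` is maximal among positroids properly contained in `B₀`. -/
def MaxProperSub (B B₀ : Set (Finset V)) : Prop :=
  IsPositroid B ∧ B ⊂ B₀ ∧
  ∀ B' : Set (Finset V), IsPositroid B' → B' ⊂ B₀ → B ⊆ B' → B' = B

/-! ### Boundaries of Wilson loop diagrams -/

/-- The smaller endpoint (edge) of a propagator. -/
def e1 (p : Finset V) : V := WithTop.untopD 0 p.min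
/-- The larger endpoint (edge) of a propagator. -/
def e2 (p : Finset V) : V := WithBot.unbotD 0 p.max

/-- The edge of `p` on which the support vertex `v` lies. -/
def edgeOf (p : Finset V) (v : V) : V :=
  if v = e1 p ∨ v = e1 p + 1 then e1 p else e2 p

/-- The endpoint of `p` other than `e`. -/
def oth (p : Finset V) (e : V) : V := if e1 p = e then e2 p else e1 p

/-- `p` is attached nearer to vertex `e` than `q` on the shared edge `e`
(in the non-crossing arrangement this means the other endpoint of `p` is
counterclockwise-further from `e`). -/
def NearerE (p q : Finset V) (e : V) : Prop :=
  (oth q e - e).val < (oth p e - e).val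

instance (p q : Finset V) (e : V) : Decidable (NearerE p q e) :=
  inferInstanceAs (Decidable (_ < _))

/-- The boundary move of `p` away from `v` collides with the other propagator `q`
(both end on the edge of `p` containing `v`, and `q`'s endpoint is in the way). -/
def IsCollision (p q : Finset V) (v : V) : Prop :=
  edgeOf p v ∈ q ∧
    ((v = edgeOf p v ∧ NearerE p q (edgeOf p v)) ∨
     (v = edgeOf p v + 1 ∧ NearerE q p (edgeOf p v)))

instance (p q : Finset V) (v : V) : Decidable (IsCollision p q v) :=
  inferInstanceAs (Decidable (_ ∧ _))

/-- The other propagator of a two-propagator diagram. -/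
noncomputable def otherProp (P : Finset (Finset V)) (p : Finset V) : Finset V :=
  if h : ∃ q, q ∈ P ∧ q ≠ p then h.choose else ∅

/-- The boundary `∂_{p,v}` of the diagram `{p, q}` is degenerate: this happens in the
vertex-removal case when the resulting diagram violates the support inequality. -/
def DegenerateB (p q : Finset V) (v : V) : Prop :=
  ¬ IsCollision p q v ∧ (((supp p).erase v) ∪ supp q).card < 5

/-- Degeneracy of the boundary `∂_{p,v}` of the diagram `P`. -/
def Degenerate (P : Finset (Finset V)) (p : Finset V) (v : V) : Prop :=
  DegenerateB p (otherProp P p) v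

/-- The positroid of the parameter family of matrices with supports given by `(p, q)`
subject to the constraint `cond`. -/
def BofFam (p q : Finset V) (cond : (Fin 2 → V → ℝ) → Prop) : Set (Finset V) :=
  { I | ∃ a b : V, a < b ∧ I = {a, b} ∧
        ∃ c : Fin 2 → V → ℝ, cond c ∧ mnr (Cmat p q c) a b ≠ 0 }

/-- The boundary positroid `B(∂_{p,v}W)` for the diagram `{p, q}`: in the collision
case the `2×2` minor on the columns of the shared edge is set to zero; in the
vertex-removal case the entry of `p` in column `v` is set to zero. -/
def BofBd (p q : Finset V) (v : V) : Set (Finset V) :=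
  BofFam p q fun c =>
    if IsCollision p q v then mnr (Cmat p q c) (edgeOf p v) (edgeOf p v + 1) = 0
    else c 0 v = 0

/-- The boundary positroid `B(∂_{p,v}W)` of the diagram `P` at `(p, v)`. -/
noncomputable def BofB (P : Finset (Finset V)) (p : Finset V) (v : V) : Set (Finset V) :=
  BofBd p (otherProp P p) v

end WLD
namespace WLDAux
open WLD Finset

/-! ### Small pair lemmas over `Fin 6` -/

lemma pairEq : ∀ a b c d : V, a < b → c < d → ({a, b} : Finset V) = {c, d} → a = c ∧ b = d := by
  decide

lemma pairCases : ∀ x y a b : V, ({x, y} : Finset V) = {a, b} → x ≠ y →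
    (x = a ∧ y = b) ∨ (x = b ∧ y = a) := by decide

/-! ### Minor computations -/

lemma mnr_swap (M : Matrix (Fin 2) V ℝ) (a b : V) : mnr M b a = - mnr M a b := by
  simp only [mnr]; ring

lemma col_ne {M : Matrix (Fin 2) V ℝ} {x y : V} (h : mnr M x y ≠ 0) :
    M 0 y ≠ 0 ∨ M 1 y ≠ 0 := by
  by_contra hc
  push_neg at hc
  exact h (by simp only [mnr, hc.1, hc.2, mul_zero, zero_mul, sub_zero])

lemma col_ne' {M : Matrix (Fin 2) V ℝ} {x y : V} (h : mnr M x y ≠ 0) :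
    M 0 x ≠ 0 ∨ M 1 x ≠ 0 := by
  rw [← neg_ne_zero, ← mnr_swap] at h
  exact col_ne h

lemma par_trans {M : Matrix (Fin 2) V ℝ} {a b c : V}
    (h1 : mnr M a b = 0) (h2 : mnr M b c = 0) (hb : M 0 b ≠ 0 ∨ M 1 b ≠ 0) :
    mnr M a c = 0 := by
  rcases hb with hb | hb
  · have key : M 0 b * mnr M a c = M 0 a * mnr M b c + M 0 c * mnr M a b := by
      simp only [mnr]; ring
    rw [h1, h2, mul_zero, mul_zero, add_zero] at key
    exact (mul_eq_zero.mp key).resolve_left hb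
  · have key : M 1 b * mnr M a c = M 1 c * mnr M a b + M 1 a * mnr M b c := by
      simp only [mnr]; ring
    rw [h1, h2, mul_zero, mul_zero, add_zero] at key
    exact (mul_eq_zero.mp key).resolve_left hb

lemma rank_two {M : Matrix (Fin 2) V ℝ} {a b : V} (h : mnr M a b ≠ 0) : M.rank = 2 := by
  have hle : M.rank ≤ 2 := by simpa using M.rank_le_card_height
  have hS : M.submatrix id ![a, b] =
      M * (Matrix.of fun j r => if j = ![a, b] r then (1 : ℝ) else 0) := by
    ext i r
    rw [Matrix.mul_apply]
    rw [Finset.sum_congr rfl (fun j _ => by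
      rw [Matrix.of_apply, mul_ite, mul_one, mul_zero])]
    rw [Finset.sum_ite_eq' Finset.univ (![a, b] r) (fun j => M i j)]
    simp [Matrix.submatrix_apply]
  have hdet : (M.submatrix id ![a, b]).det ≠ 0 := by
    rw [Matrix.det_fin_two]
    simpa [Matrix.submatrix_apply, mnr] using h
  have h2r : (M.submatrix id ![a, b]).rank = 2 := by
    rw [Matrix.rank_of_isUnit _ ((Matrix.isUnit_iff_isUnit_det _).mpr
      (isUnit_iff_ne_zero.mpr hdet))]
    simp
  have hge : 2 ≤ M.rank := by
    have hmul := Matrix.rank_mul_le_left M (Matrix.of fun j r => if j = ![a, b] r then (1 : ℝ) else 0)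
    rw [← hS, h2r] at hmul
    exact hmul
  exact le_antisymm hle hge



/-! ### Combinatorial conditions -/

/-- Combinatorial description of the pairs in `B(W)`. -/
def CWc (p q : Finset V) (a b : V) : Prop :=
  a ≠ b ∧ ((a ∈ supp p ∧ b ∈ supp q) ∨ (a ∈ supp q ∧ b ∈ supp p))

/-- Combinatorial description of the pairs in the boundary positroid. -/
def Cd (p q : Finset V) (v : V) (a b : V) : Prop :=
  if IsCollision p q v then
    CWc p q a b ∧ ({a, b} : Finset V) ≠ {edgeOf p v, edgeOf p v + 1}
  else a ≠ b ∧ ((a ∈ (supp p).erase v ∧ b ∈ supp q) ∨ (a ∈ supp q ∧ b ∈ (supp p).erase v))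

instance (p q : Finset V) (a b : V) : Decidable (CWc p q a b) := by
  unfold CWc; infer_instance

instance (p q : Finset V) (v a b : V) : Decidable (Cd p q v a b) := by
  unfold Cd; infer_instance

instance (p q : Finset V) (v : V) : Decidable (DegenerateB p q v) := by
  unfold DegenerateB; infer_instance

lemma CWc_symm {p q : Finset V} {a b : V} (h : CWc p q a b) : CWc p q b a :=
  ⟨h.1.symm, h.2.elim (fun h' => Or.inr ⟨h'.2, h'.1⟩) (fun h' => Or.inl ⟨h'.2, h'.1⟩)⟩

lemma Cd_symm {p q : Finset V} {v a b : V} (h : Cd p q v a b) : Cd p q v b a := by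
  unfold Cd at *
  by_cases hcol : IsCollision p q v
  · rw [if_pos hcol] at h ⊢
    exact ⟨CWc_symm h.1, by rw [Finset.pair_comm]; exact h.2⟩
  · rw [if_neg hcol] at h ⊢
    exact ⟨h.1.symm, h.2.elim (fun h' => Or.inr ⟨h'.2, h'.1⟩) (fun h' => Or.inl ⟨h'.2, h'.1⟩)⟩

lemma Cd_sub_CWc {p q : Finset V} {v a b : V} (h : Cd p q v a b) : CWc p q a b := by
  unfold Cd at h
  split at h
  · exact h.1
  · exact ⟨h.1, h.2.imp (fun h' => ⟨Finset.mem_of_mem_erase h'.1, h'.2⟩)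
      (fun h' => ⟨h'.1, Finset.mem_of_mem_erase h'.2⟩)⟩

lemma CWc_ne {p q : Finset V} {a b : V} (h : CWc p q a b) : a ≠ b := h.1

/-! ### Minors of `Cmat` -/

lemma Cmat_zero (p q : Finset V) (c : Fin 2 → V → ℝ) (a : V) :
    Cmat p q c 0 a = if a ∈ supp p then c 0 a else 0 := by
  simp [Cmat]

lemma Cmat_one (p q : Finset V) (c : Fin 2 → V → ℝ) (a : V) :
    Cmat p q c 1 a = if a ∈ supp q then c 1 a else 0 := by
  have : ((1 : Fin 2) = 0) = False := by simp
  simp [Cmat, this]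

lemma mnr_Cmat (p q : Finset V) (c : Fin 2 → V → ℝ) (a b : V) :
    mnr (Cmat p q c) a b =
      (if a ∈ supp p then c 0 a else 0) * (if b ∈ supp q then c 1 b else 0) -
      (if b ∈ supp p then c 0 b else 0) * (if a ∈ supp q then c 1 a else 0) := by
  rw [mnr, Cmat_zero, Cmat_zero, Cmat_one, Cmat_one]

lemma mnr_ne_cases {p q : Finset V} {c : Fin 2 → V → ℝ} {a b : V}
    (h : mnr (Cmat p q c) a b ≠ 0) :
    (a ∈ supp p ∧ b ∈ supp q ∧ c 0 a ≠ 0 ∧ c 1 b ≠ 0) ∨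
    (b ∈ supp p ∧ a ∈ supp q ∧ c 0 b ≠ 0 ∧ c 1 a ≠ 0) := by
  rw [mnr_Cmat] at h
  by_cases H1 : (if a ∈ supp p then c 0 a else 0) * (if b ∈ supp q then c 1 b else 0) ≠ 0
  · left
    have f1 : a ∈ supp p := by
      by_contra hx; rw [if_neg hx, zero_mul] at H1; exact H1 rfl
    have f2 : b ∈ supp q := by
      by_contra hx; rw [if_pos f1, if_neg hx, mul_zero] at H1; exact H1 rfl
    rw [if_pos f1, if_pos f2] at H1
    exact ⟨f1, f2, mul_ne_zero_iff.mp H1⟩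
  · right
    have H2 : (if b ∈ supp p then c 0 b else 0) * (if a ∈ supp q then c 1 a else 0) ≠ 0 := by
      intro hz
      exact h (by rw [not_not.mp H1, hz, sub_zero])
    have f1 : b ∈ supp p := by
      by_contra hx; rw [if_neg hx, zero_mul] at H2; exact H2 rfl
    have f2 : a ∈ supp q := by
      by_contra hx; rw [if_pos f1, if_neg hx, mul_zero] at H2; exact H2 rfl
    rw [if_pos f1, if_pos f2] at H2
    exact ⟨f1, f2, mul_ne_zero_iff.mp H2⟩

/-! ### Indicator parameters -/

/-- Parameters which are `1` at `(0, s)` and `(1, t)` and `0` elsewhere. -/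
def ind (s t : V) : Fin 2 → V → ℝ := fun i u =>
  if (i = 0 ∧ u = s) ∨ (i = 1 ∧ u = t) then 1 else 0

lemma ind_apply_0 (s t u : V) : ind s t 0 u = if u = s then 1 else 0 := by
  have : ((0 : Fin 2) = 1) = False := by simp
  simp [ind, this]

lemma ind_apply_1 (s t u : V) : ind s t 1 u = if u = t then 1 else 0 := by
  have : ((1 : Fin 2) = 0) = False := by simp
  simp [ind, this]

lemma iteite (P Q : Prop) [Decidable P] [Decidable Q] :
    (if P then (if Q then (1 : ℝ) else 0) else 0) = if P ∧ Q then 1 else 0 := by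
  by_cases hP : P <;> by_cases hQ : Q <;> simp [hP, hQ]

lemma mnr_ind (p q : Finset V) (s t x y : V) :
    mnr (Cmat p q (ind s t)) x y =
      (if x ∈ supp p ∧ x = s then (1 : ℝ) else 0) * (if y ∈ supp q ∧ y = t then 1 else 0) -
      (if y ∈ supp p ∧ y = s then 1 else 0) * (if x ∈ supp q ∧ x = t then 1 else 0) := by
  rw [mnr_Cmat, ind_apply_0, ind_apply_0, ind_apply_1, ind_apply_1,
    iteite, iteite, iteite, iteite]

lemma mnr_ind_self {p q : Finset V} {x y : V} (hxy : x ≠ y)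
    (hx : x ∈ supp p) (hy : y ∈ supp q) :
    mnr (Cmat p q (ind x y)) x y = 1 := by
  rw [mnr_ind]
  simp [hx, hy, hxy, hxy.symm]

lemma mnr_ind_self' {p q : Finset V} {x y : V} (hxy : x ≠ y)
    (hy : y ∈ supp p) (hx : x ∈ supp q) :
    mnr (Cmat p q (ind y x)) x y = -1 := by
  rw [mnr_ind]
  simp [hx, hy, hxy, hxy.symm]

lemma mnr_ind_zero {p q : Finset V} {s t x y : V}
    (h1 : ¬(x = s ∧ y = t)) (h2 : ¬(y = s ∧ x = t)) :
    mnr (Cmat p q (ind s t)) x y = 0 := by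
  rw [mnr_ind]
  by_cases hxs : x = s <;> by_cases hyt : y = t <;> by_cases hys : y = s <;>
    by_cases hxt : x = t <;> simp_all


/-! ### Characterization of `BW` and `BofBd` -/

lemma mem_BW_iff {p q : Finset V} (hpq : p ≠ q) (I : Finset V) :
    I ∈ BW {p, q} ↔ ∃ a b : V, a < b ∧ I = {a, b} ∧ CWc p q a b := by
  constructor
  · rintro ⟨p', hp', q', hq', hne, a, b, hab, hI, c, hc⟩
    refine ⟨a, b, hab, hI, hab.ne, ?_⟩
    simp only [Finset.mem_insert, Finset.mem_singleton] at hp' hq'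
    rcases hp' with rfl | rfl <;> rcases hq' with rfl | rfl
    · exact absurd rfl hne
    · rcases mnr_ne_cases hc with ⟨h1, h2, _⟩ | ⟨h1, h2, _⟩
      · exact Or.inl ⟨h1, h2⟩
      · exact Or.inr ⟨h2, h1⟩
    · rcases mnr_ne_cases hc with ⟨h1, h2, _⟩ | ⟨h1, h2, _⟩
      · exact Or.inr ⟨h1, h2⟩
      · exact Or.inl ⟨h2, h1⟩
    · exact absurd rfl hne
  · rintro ⟨a, b, hab, hI, hne, hcw⟩
    refine ⟨p, Finset.mem_insert_self _ _, q,
      Finset.mem_insert_of_mem (Finset.mem_singleton_self _), hpq, a, b, hab, hI, ?_⟩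
    rcases hcw with ⟨ha, hb⟩ | ⟨ha, hb⟩
    · exact ⟨ind a b, by rw [mnr_ind_self hne ha hb]; norm_num⟩
    · exact ⟨ind b a, by rw [mnr_ind_self' hne hb ha]; norm_num⟩

lemma mem_BofBd_iff (p q : Finset V) (v : V) (I : Finset V) :
    I ∈ BofBd p q v ↔ ∃ a b : V, a < b ∧ I = {a, b} ∧ Cd p q v a b := by
  by_cases hcol : IsCollision p q v
  · constructor
    · rintro ⟨a, b, hab, hI, c, hcond, hc⟩
      rw [if_pos hcol] at hcond
      refine ⟨a, b, hab, hI, ?_⟩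
      rw [Cd, if_pos hcol]
      constructor
      · refine ⟨hab.ne, ?_⟩
        rcases mnr_ne_cases hc with ⟨h1, h2, _⟩ | ⟨h1, h2, _⟩
        · exact Or.inl ⟨h1, h2⟩
        · exact Or.inr ⟨h2, h1⟩
      · intro hEq
        rcases pairCases a b (edgeOf p v) (edgeOf p v + 1) hEq hab.ne with ⟨rfl, rfl⟩ | ⟨rfl, rfl⟩
        · exact hc hcond
        · exact hc (by rw [mnr_swap, hcond, neg_zero])
    · rintro ⟨a, b, hab, hI, hcd⟩
      rw [Cd, if_pos hcol] at hcd
      obtain ⟨⟨hne, hcw⟩, hpair⟩ := hcd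
      rcases hcw with ⟨ha, hb⟩ | ⟨ha, hb⟩
      · refine ⟨a, b, hab, hI, ind a b, ?_, ?_⟩
        · beta_reduce
          rw [if_pos hcol]
          refine mnr_ind_zero ?_ ?_
          · rintro ⟨rfl, rfl⟩; exact hpair rfl
          · rintro ⟨rfl, rfl⟩; exact hpair (Finset.pair_comm _ _)
        · rw [mnr_ind_self hne ha hb]; norm_num
      · refine ⟨a, b, hab, hI, ind b a, ?_, ?_⟩
        · beta_reduce
          rw [if_pos hcol]
          refine mnr_ind_zero ?_ ?_
          · rintro ⟨rfl, rfl⟩; exact hpair (Finset.pair_comm _ _)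
          · rintro ⟨rfl, rfl⟩; exact hpair rfl
        · rw [mnr_ind_self' hne hb ha]; norm_num
  · constructor
    · rintro ⟨a, b, hab, hI, c, hcond, hc⟩
      rw [if_neg hcol] at hcond
      refine ⟨a, b, hab, hI, ?_⟩
      rw [Cd, if_neg hcol]
      refine ⟨hab.ne, ?_⟩
      rcases mnr_ne_cases hc with ⟨h1, h2, h3, _⟩ | ⟨h1, h2, h3, _⟩
      · have hav : a ≠ v := by rintro rfl; exact h3 hcond
        exact Or.inl ⟨Finset.mem_erase.mpr ⟨hav, h1⟩, h2⟩
      · have hbv : b ≠ v := by rintro rfl; exact h3 hcond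
        exact Or.inr ⟨h2, Finset.mem_erase.mpr ⟨hbv, h1⟩⟩
    · rintro ⟨a, b, hab, hI, hcd⟩
      rw [Cd, if_neg hcol] at hcd
      obtain ⟨hne, hcw⟩ := hcd
      rcases hcw with ⟨ha, hb⟩ | ⟨ha, hb⟩
      · obtain ⟨hav, ha'⟩ := Finset.mem_erase.mp ha
        refine ⟨a, b, hab, hI, ind a b, ?_, ?_⟩
        · beta_reduce
          rw [if_neg hcol, ind_apply_0, if_neg (fun h => hav (Eq.symm h))]
        · rw [mnr_ind_self hne ha' hb]; norm_num
      · obtain ⟨hbv, hb'⟩ := Finset.mem_erase.mp hb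
        refine ⟨a, b, hab, hI, ind b a, ?_, ?_⟩
        · beta_reduce
          rw [if_neg hcol, ind_apply_0, if_neg (fun h => hbv (Eq.symm h))]
        · rw [mnr_ind_self' hne hb' ha]; norm_num

/-! ### Integer realizations -/

/-- Integer `2×2` determinant of a pair of columns. -/
def dz (w : V → ℤ × ℤ) (a b : V) : ℤ := (w a).1 * (w b).2 - (w b).1 * (w a).2

/-- The real matrix with integer columns `w`. -/
def matOf (w : V → ℤ × ℤ) : Matrix (Fin 2) V ℝ :=
  Matrix.of fun r c => if r = 0 then ((w c).1 : ℝ) else ((w c).2 : ℝ)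

lemma mnr_swap_ne {M : Matrix (Fin 2) V ℝ} {a b : V} (h : mnr M a b ≠ 0) :
    mnr M b a ≠ 0 := by
  rw [mnr_swap]; exact neg_ne_zero.mpr h

lemma mnr_matOf (w : V → ℤ × ℤ) (a b : V) : mnr (matOf w) a b = (dz w a b : ℝ) := by
  have h1 : ((1 : Fin 2) = 0) = False := by simp
  simp only [mnr, matOf, Matrix.of_apply, if_pos rfl, h1, if_false, dz]
  push_cast
  ring

/-! ### The master lemma -/

lemma master (Bd BWs : Set (Finset V)) (Cdc CWp : V → V → Prop)
    (hBd : Bd = {I | ∃ a b : V, a < b ∧ I = {a, b} ∧ Cdc a b})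
    (hBW : BWs = {I | ∃ a b : V, a < b ∧ I = {a, b} ∧ CWp a b})
    (hsymd : ∀ a b, Cdc a b → Cdc b a)
    (hsymW : ∀ a b, CWp a b → CWp b a)
    (hsub : ∀ a b, Cdc a b → CWp a b)
    (hneW : ∀ a b, CWp a b → a ≠ b)
    (w : V → ℤ × ℤ)
    (h1 : ∀ a b : V, a < b → 0 ≤ dz w a b)
    (h2 : ∀ a b : V, dz w a b ≠ 0 ↔ Cdc a b)
    (hne : ∃ a b : V, a < b ∧ Cdc a b)
    (hprop : ∃ a b : V, a < b ∧ CWp a b ∧ ¬ Cdc a b)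
    (v₀ : V)
    (hcom : ∀ x y, CWp x y → ¬ Cdc x y → x = v₀ ∨ y = v₀)
    (H3 : ∀ b c : V, (CWp v₀ b ∧ ¬ Cdc v₀ b) → (CWp v₀ c ∧ ¬ Cdc v₀ c) → b ≠ c →
      ((¬ CWp b c ∧ ∃ a₀ : V, Cdc a₀ b) ∨
       (∃ w₀ : V, ¬ CWp v₀ w₀ ∧ v₀ ≠ w₀ ∧ w₀ ≠ b ∧ Cdc w₀ b))) :
    MaxProperSub Bd BWs := by
  -- membership helpers
  have memBd : ∀ x y : V, Cdc x y → ({x, y} : Finset V) ∈ Bd := by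
    intro x y hxy
    rcases lt_trichotomy x y with h | h | h
    · exact hBd ▸ ⟨x, y, h, rfl, hxy⟩
    · exact absurd h (hneW _ _ (hsub _ _ hxy))
    · exact hBd ▸ ⟨y, x, h, Finset.pair_comm x y, hsymd _ _ hxy⟩
  have memBdRev : ∀ x y : V, x ≠ y → ({x, y} : Finset V) ∈ Bd → Cdc x y := by
    intro x y hxy hmem
    obtain ⟨a, b, hab, hpair, hcd⟩ := hBd ▸ hmem
    rcases pairCases x y a b hpair hxy with ⟨rfl, rfl⟩ | ⟨rfl, rfl⟩
    · exact hcd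
    · exact hsymd _ _ hcd
  have memBW : ∀ x y : V, CWp x y → ({x, y} : Finset V) ∈ BWs := by
    intro x y hxy
    rcases lt_trichotomy x y with h | h | h
    · exact hBW ▸ ⟨x, y, h, rfl, hxy⟩
    · exact absurd h (hneW _ _ hxy)
    · exact hBW ▸ ⟨y, x, h, Finset.pair_comm x y, hsymW _ _ hxy⟩
  have memBWRev : ∀ x y : V, x ≠ y → ({x, y} : Finset V) ∈ BWs → CWp x y := by
    intro x y hxy hmem
    obtain ⟨a, b, hab, hpair, hcw⟩ := hBW ▸ hmem
    rcases pairCases x y a b hpair hxy with ⟨rfl, rfl⟩ | ⟨rfl, rfl⟩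
    · exact hcw
    · exact hsymW _ _ hcw
  refine ⟨?_, ?_, ?_⟩
  · -- IsPositroid Bd
    obtain ⟨a₁, b₁, hab₁, hcd₁⟩ := hne
    refine ⟨⟨{a₁, b₁}, memBd _ _ hcd₁⟩, ?_, matOf w, ?_, ?_, ?_⟩
    · intro I hI
      obtain ⟨a, b, hab, rfl, _⟩ := hBd ▸ hI
      exact Finset.card_pair hab.ne
    · have : mnr (matOf w) a₁ b₁ ≠ 0 := by
        rw [mnr_matOf]
        exact_mod_cast Int.cast_ne_zero.mpr ((h2 _ _).mpr hcd₁)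
      exact rank_two this
    · intro a b hab
      rw [mnr_matOf]
      exact_mod_cast h1 a b hab
    · intro a b hab
      rw [mnr_matOf]
      constructor
      · intro h
        exact memBd a b ((h2 a b).mp (by exact_mod_cast h))
      · intro h
        have := memBdRev a b hab.ne h
        exact Int.cast_ne_zero.mpr ((h2 a b).mpr this)
  · -- Bd ⊂ BWs
    constructor
    · intro I hI
      obtain ⟨a, b, hab, rfl, hcd⟩ := hBd ▸ hI
      exact memBW a b (hsub a b hcd)
    · intro hsup
      obtain ⟨a, b, hab, hcw, hncd⟩ := hprop
      exact hncd (memBdRev a b hab.ne (hsup (memBW a b hcw)))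
  · -- maximality
    intro B' hpos hss hsub'
    obtain ⟨-, -, M, -, -, hrep⟩ := hpos
    have memB' : ∀ x y : V, x ≠ y → (({x, y} : Finset V) ∈ B' ↔ mnr M x y ≠ 0) := by
      intro x y hxy
      rcases lt_or_gt_of_ne hxy with h | h
      · exact (hrep x y h).symm
      · rw [Finset.pair_comm, ← (hrep y x h), mnr_swap, neg_ne_zero]
    have dzero : ∀ x y : V, x ≠ y → ¬ CWp x y → mnr M x y = 0 := by
      intro x y hxy hncw
      have : ({x, y} : Finset V) ∉ B' := fun hmem =>
        hncw (memBWRev x y hxy (hss.1 hmem))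
      exact not_not.mp (fun h => this ((memB' x y hxy).mpr h))
    have dne : ∀ x y : V, Cdc x y → mnr M x y ≠ 0 := by
      intro x y hxy
      exact (memB' x y (hneW _ _ (hsub _ _ hxy))).mp (hsub' (memBd x y hxy))
    by_contra hneq
    have hnotsub : ¬ B' ⊆ Bd := fun h => hneq (le_antisymm h hsub')
    obtain ⟨I, hIB', hIBd⟩ := Set.not_subset.mp hnotsub
    obtain ⟨x', y', hxy', rfl, hcw'⟩ := hBW ▸ (hss.1 hIB')
    have hncd' : ¬ Cdc x' y' := fun h => hIBd (memBd x' y' h)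
    -- a difference pair in B' based at v₀
    have hb₁ : ∃ b₁ : V, (CWp v₀ b₁ ∧ ¬ Cdc v₀ b₁) ∧ mnr M v₀ b₁ ≠ 0 := by
      have hmnr' : mnr M x' y' ≠ 0 := (memB' x' y' hxy'.ne).mp hIB'
      rcases hcom x' y' hcw' hncd' with rfl | rfl
      · exact ⟨y', ⟨hcw', hncd'⟩, hmnr'⟩
      · exact ⟨x', ⟨hsymW _ _ hcw', fun h => hncd' (hsymd _ _ h)⟩, mnr_swap_ne hmnr'⟩
    obtain ⟨b₁, ⟨hcwb₁, hncdb₁⟩, hmb₁⟩ := hb₁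
    -- every difference pair based at v₀ is in B'
    have CLM : ∀ b : V, CWp v₀ b → ¬ Cdc v₀ b → mnr M v₀ b ≠ 0 := by
      intro b hcwb hncdb
      by_cases hbb₁ : b = b₁
      · subst hbb₁; exact hmb₁
      intro h0
      rcases H3 b b₁ ⟨hcwb, hncdb⟩ ⟨hcwb₁, hncdb₁⟩ hbb₁ with ⟨hncw, a₀, hcda₀⟩ | ⟨w₀, hncw, hvw, hwb, hcdw⟩
      · have hbb : mnr M b b₁ = 0 := dzero b b₁ hbb₁ hncw
        have hcolb : M 0 b ≠ 0 ∨ M 1 b ≠ 0 := col_ne (dne a₀ b hcda₀)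
        exact hmb₁ (par_trans h0 hbb hcolb)
      · have hwv : mnr M w₀ v₀ = 0 :=
          dzero w₀ v₀ (Ne.symm hvw) (fun h => hncw (hsymW _ _ h))
        have hcolv : M 0 v₀ ≠ 0 ∨ M 1 v₀ ≠ 0 := col_ne' hmb₁
        exact (dne w₀ b hcdw) (par_trans hwv h0 hcolv)
    -- hence BWs ⊆ B', contradiction
    apply hss.not_subset
    intro J hJ
    obtain ⟨x, y, hxy, rfl, hcwJ⟩ := hBW ▸ hJ
    by_cases hc : Cdc x y
    · exact hsub' (memBd x y hc)
    rcases hcom x y hcwJ hc with rfl | rfl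
    · exact (memB' _ y hxy.ne).mpr (CLM y hcwJ hc)
    · exact (memB' x _ hxy.ne).mpr
        (mnr_swap_ne (CLM x (hsymW _ _ hcwJ) (fun h => hc (hsymd _ _ h))))

/-! ### Crossing via interleaving -/

def Interleave (i j k l : V) : Prop := (i < k ∧ k < j ∧ j < l) ∨ (k < i ∧ i < l ∧ l < j)

instance (i j k l : V) : Decidable (Interleave i j k l) := by
  unfold Interleave; infer_instance

lemma crossing_iff {i j k l : V} (hij : i < j) (hkl : k < l) :
    Crossing {i, j} {k, l} ↔ Interleave i j k l := by
  constructor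
  · rintro ⟨a, b, c, d, hab, hbc, hcd, ⟨hp, hq⟩ | ⟨hp, hq⟩⟩
    · obtain ⟨rfl, rfl⟩ := pairEq i j a c hij (hab.trans hbc) hp
      obtain ⟨rfl, rfl⟩ := pairEq k l b d hkl (hbc.trans hcd) hq
      exact Or.inl ⟨hab, hbc, hcd⟩
    · obtain ⟨rfl, rfl⟩ := pairEq i j b d hij (hbc.trans hcd) hp
      obtain ⟨rfl, rfl⟩ := pairEq k l a c hkl (hab.trans hbc) hq
      exact Or.inr ⟨hab, hbc, hcd⟩
  · rintro (⟨h1, h2, h3⟩ | ⟨h1, h2, h3⟩)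
    · exact ⟨i, k, j, l, h1, h2, h3, Or.inl ⟨rfl, rfl⟩⟩
    · exact ⟨k, i, l, j, h1, h2, h3, Or.inr ⟨rfl, rfl⟩⟩

/-! ### The table of realizing integer matrices -/

set_option maxHeartbeats 2000000 in
def tbl : List (Nat × (List (Int × Int))) := [
  (450, [(-1, -2), (1, 0), (2, 1), (1, 1), (1, 2), (0, 0)]),
  (451, [(1, 0), (1, 0), (2, 1), (1, 1), (1, 2), (0, 0)]),
  (453, [(1, 0), (2, 1), (1, 1), (1, 2), (1, 2), (0, 0)]),
  (456, [(-1, -1), (1, 0), (2, 1), (2, 1), (1, 1), (1, 1)]),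
  (457, [(1, 0), (1, 0), (2, 1), (2, 1), (1, 1), (1, 1)]),
  (458, [(1, 0), (2, 1), (0, 0), (1, 1), (1, 2), (1, 2)]),
  (459, [(1, 0), (2, 1), (1, 1), (0, 0), (1, 2), (1, 2)]),
  (528, [(0, 0), (1, 0), (2, 1), (1, 1), (1, 2), (1, 2)]),
  (529, [(1, 0), (0, 0), (2, 1), (1, 1), (1, 2), (1, 2)]),
  (530, [(1, 0), (1, 0), (2, 1), (2, 1), (1, 1), (1, 1)]),
  (531, [(1, 0), (1, 0), (2, 1), (1, 1), (1, 1), (1, 1)]),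
  (534, [(-1, -2), (1, 0), (2, 1), (1, 1), (0, 0), (1, 2)]),
  (536, [(1, 0), (2, 1), (1, 1), (1, 1), (0, 0), (1, 2)]),
  (537, [(1, 0), (2, 1), (1, 1), (1, 2), (0, 0), (1, 2)]),
  (570, [(-1, -1), (1, 0), (1, 0), (2, 1), (1, 1), (1, 1)]),
  (571, [(1, 0), (0, 0), (2, 1), (1, 1), (1, 2), (1, 2)]),
  (572, [(1, 0), (2, 1), (0, 0), (1, 1), (1, 2), (1, 2)]),
  (573, [(1, 0), (2, 1), (2, 1), (1, 1), (1, 1), (1, 1)]),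
  (660, [(1, 0), (1, 0), (2, 1), (1, 1), (1, 2), (0, 0)]),
  (661, [(1, 0), (2, 1), (2, 1), (1, 1), (1, 2), (0, 0)]),
  (663, [(1, 0), (2, 1), (1, 1), (1, 1), (1, 2), (0, 0)]),
  (672, [(-1, -2), (1, 0), (0, 0), (2, 1), (1, 1), (1, 2)]),
  (673, [(1, 0), (1, 0), (0, 0), (2, 1), (1, 1), (1, 2)]),
  (676, [(1, 0), (2, 1), (0, 0), (1, 1), (1, 2), (1, 2)]),
  (703, [(1, 0), (2, 1), (2, 1), (1, 1), (1, 2), (0, 0)]),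
  (705, [(1, 0), (2, 1), (1, 1), (1, 1), (1, 2), (0, 0)]),
  (706, [(1, 0), (2, 1), (1, 1), (1, 2), (1, 2), (0, 0)]),
  (786, [(-1, -2), (1, 0), (0, 0), (2, 1), (1, 1), (1, 2)]),
  (789, [(1, 0), (2, 1), (0, 0), (1, 1), (1, 1), (1, 2)]),
  (790, [(1, 0), (2, 1), (0, 0), (1, 1), (1, 2), (1, 2)]),
  (876, [(1, 0), (1, 0), (2, 1), (2, 1), (1, 1), (1, 1)]),
  (877, [(1, 0), (2, 1), (2, 1), (2, 1), (1, 1), (1, 1)]),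
  (880, [(1, 0), (2, 1), (1, 1), (1, 1), (0, 0), (1, 2)]),
  (881, [(1, 0), (2, 1), (1, 1), (1, 1), (1, 2), (0, 0)]),
  (882, [(1, 0), (1, 0), (0, 0), (2, 1), (1, 1), (1, 2)]),
  (883, [(1, 0), (2, 1), (0, 0), (2, 1), (1, 1), (1, 2)]),
  (886, [(1, 0), (2, 1), (0, 0), (1, 1), (1, 1), (1, 2)]),
  (918, [(0, 0), (1, 0), (2, 1), (2, 1), (1, 1), (1, 2)]),
  (919, [(-1, -1), (1, 0), (1, 0), (1, 0), (2, 1), (1, 1)]),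
  (922, [(-1, -1), (1, 0), (2, 1), (2, 1), (2, 1), (1, 1)]),
  (923, [(1, 0), (2, 1), (1, 1), (1, 1), (1, 2), (0, 0)]),
  (925, [(1, 0), (2, 1), (2, 1), (0, 0), (1, 1), (1, 2)]),
  (928, [(1, 0), (2, 1), (1, 1), (0, 0), (1, 1), (1, 2)]),
  (929, [(1, 0), (2, 1), (1, 1), (0, 0), (1, 2), (1, 2)]),
  (960, [(0, 0), (1, 0), (2, 1), (2, 1), (1, 1), (1, 2)]),
  (961, [(1, 0), (0, 0), (2, 1), (2, 1), (1, 1), (1, 2)]),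
  (964, [(1, 0), (1, 0), (2, 1), (2, 1), (2, 1), (1, 1)]),
  (965, [(1, 0), (1, 0), (2, 1), (2, 1), (1, 1), (1, 1)]),
  (1963, [(1, 0), (1, 0), (2, 1), (1, 1), (1, 2), (0, 0)]),
  (1965, [(1, 0), (2, 1), (1, 1), (1, 2), (1, 2), (0, 0)]),
  (1966, [(-1, -2), (1, 0), (2, 1), (1, 1), (1, 2), (0, 0)]),
  (1969, [(-1, -1), (-1, -1), (1, 0), (1, 0), (2, 1), (1, 1)]),
  (1970, [(-1, -2), (1, 0), (0, 0), (2, 1), (1, 1), (1, 2)]),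
  (1971, [(-1, -2), (1, 0), (2, 1), (0, 0), (1, 1), (1, 2)]),
  (1972, [(-1, -1), (1, 0), (2, 1), (2, 1), (1, 1), (1, 1)]),
  (2005, [(0, 0), (-1, -2), (1, 0), (2, 1), (1, 1), (1, 2)]),
  (2006, [(0, 0), (1, 0), (1, 0), (2, 1), (1, 1), (1, 2)]),
  (2008, [(0, 0), (1, 0), (2, 1), (1, 1), (1, 2), (1, 2)]),
  (2011, [(-1, -1), (-1, -1), (1, 0), (2, 1), (2, 1), (1, 1)]),
  (2012, [(-1, -1), (1, 0), (1, 0), (2, 1), (2, 1), (1, 1)]),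
  (2013, [(-1, -2), (1, 0), (2, 1), (0, 0), (1, 1), (1, 2)]),
  (2014, [(-1, -2), (1, 0), (2, 1), (1, 1), (0, 0), (1, 2)]),
  (2083, [(-1, -2), (0, 0), (1, 0), (2, 1), (1, 1), (1, 2)]),
  (2084, [(-1, -2), (1, 0), (0, 0), (2, 1), (1, 1), (1, 2)]),
  (2085, [(-1, -1), (1, 0), (1, 0), (2, 1), (2, 1), (1, 1)]),
  (2086, [(-1, -1), (1, 0), (1, 0), (2, 1), (1, 1), (1, 1)]),
  (2185, [(1, 0), (1, 0), (2, 1), (0, 0), (1, 1), (1, 2)]),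
  (2188, [(1, 0), (2, 1), (1, 1), (0, 0), (1, 2), (1, 2)]),
  (2189, [(-1, -2), (1, 0), (2, 1), (0, 0), (1, 1), (1, 2)]),
  (2215, [(0, 0), (1, 0), (1, 0), (2, 1), (1, 1), (1, 2)]),
  (2216, [(0, 0), (1, 0), (2, 1), (2, 1), (1, 1), (1, 2)]),
  (2218, [(0, 0), (1, 0), (2, 1), (1, 1), (1, 1), (1, 2)]),
  (2227, [(1, 0), (1, 0), (2, 1), (0, 0), (1, 1), (1, 2)]),
  (2228, [(1, 0), (2, 1), (2, 1), (0, 0), (1, 1), (1, 2)]),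
  (2231, [(-1, -2), (1, 0), (2, 1), (0, 0), (1, 1), (1, 2)]),
  (2258, [(0, 0), (1, 0), (2, 1), (2, 1), (1, 1), (1, 2)]),
  (2260, [(0, 0), (1, 0), (2, 1), (1, 1), (1, 1), (1, 2)]),
  (2261, [(0, 0), (1, 0), (2, 1), (1, 1), (1, 2), (1, 2)]),
  (2430, [(0, 0), (1, 0), (2, 1), (1, 1), (1, 1), (1, 2)]),
  (2431, [(-1, -1), (1, 0), (1, 0), (2, 1), (2, 1), (1, 1)]),
  (2432, [(-1, -1), (1, 0), (2, 1), (2, 1), (2, 1), (1, 1)]),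
  (2435, [(1, 0), (2, 1), (1, 1), (1, 2), (1, 2), (0, 0)]),
  (2437, [(1, 0), (2, 1), (2, 1), (0, 0), (1, 1), (1, 2)]),
  (2438, [(1, 0), (2, 1), (1, 1), (0, 0), (1, 1), (1, 2)]),
  (2441, [(1, 0), (2, 1), (1, 1), (0, 0), (1, 2), (1, 2)]),
  (2472, [(0, 0), (1, 0), (2, 1), (1, 1), (1, 1), (1, 2)]),
  (2473, [(1, 0), (0, 0), (2, 1), (1, 1), (1, 1), (1, 2)]),
  (2474, [(1, 0), (1, 0), (2, 1), (2, 1), (2, 1), (1, 1)]),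
  (2477, [(1, 0), (1, 0), (2, 1), (1, 1), (1, 1), (1, 1)]),
  (2478, [(-1, -2), (1, 0), (2, 1), (1, 1), (0, 0), (1, 2)]),
  (2480, [(1, 0), (2, 1), (1, 1), (1, 1), (0, 0), (1, 2)]),
  (2483, [(1, 0), (2, 1), (1, 1), (1, 2), (0, 0), (1, 2)]),
  (2514, [(-1, -1), (1, 0), (1, 0), (2, 1), (2, 1), (1, 1)]),
  (2515, [(1, 0), (0, 0), (2, 1), (1, 1), (1, 1), (1, 2)]),
  (2516, [(1, 0), (2, 1), (0, 0), (1, 1), (1, 1), (1, 2)]),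
  (2519, [(1, 0), (2, 1), (2, 1), (1, 1), (1, 1), (1, 1)]),
  (3470, [(1, 0), (1, 0), (1, 0), (2, 1), (1, 1), (1, 1)]),
  (3471, [(1, 0), (1, 0), (2, 1), (2, 1), (1, 1), (1, 1)]),
  (3472, [(1, 0), (1, 0), (2, 1), (1, 1), (0, 0), (1, 2)]),
  (3473, [(1, 0), (1, 0), (2, 1), (1, 1), (1, 2), (0, 0)]),
  (3482, [(1, 0), (1, 0), (0, 0), (2, 1), (1, 1), (1, 2)]),
  (3483, [(1, 0), (1, 0), (2, 1), (0, 0), (1, 1), (1, 2)]),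
  (3484, [(1, 0), (1, 0), (2, 1), (2, 1), (1, 1), (1, 1)]),
  (3485, [(-1, -1), (-1, -1), (1, 0), (1, 0), (2, 1), (1, 1)]),
  (3518, [(0, 0), (1, 0), (1, 0), (2, 1), (1, 1), (1, 2)]),
  (3520, [(0, 0), (1, 0), (2, 1), (1, 1), (1, 2), (1, 2)]),
  (3521, [(0, 0), (-1, -2), (1, 0), (2, 1), (1, 1), (1, 2)]),
  (3524, [(1, 0), (1, 0), (1, 0), (2, 1), (2, 1), (1, 1)]),
  (3525, [(1, 0), (1, 0), (2, 1), (0, 0), (1, 1), (1, 2)]),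
  (3526, [(1, 0), (1, 0), (2, 1), (1, 1), (0, 0), (1, 2)]),
  (3527, [(-1, -1), (-1, -1), (1, 0), (2, 1), (2, 1), (1, 1)]),
  (3560, [(1, 0), (0, 0), (1, 0), (2, 1), (1, 1), (1, 2)]),
  (3561, [(1, 0), (0, 0), (2, 1), (2, 1), (1, 1), (1, 2)]),
  (3563, [(-1, -2), (0, 0), (1, 0), (2, 1), (1, 1), (1, 2)]),
  (3684, [(1, 0), (1, 0), (2, 1), (1, 1), (0, 0), (1, 2)]),
  (3686, [(1, 0), (2, 1), (2, 1), (1, 1), (0, 0), (1, 2)]),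
  (3687, [(1, 0), (2, 1), (1, 1), (1, 1), (0, 0), (1, 2)]),
  (3738, [(1, 0), (1, 0), (2, 1), (1, 1), (0, 0), (1, 2)]),
  (3740, [(1, 0), (2, 1), (2, 1), (1, 1), (0, 0), (1, 2)]),
  (3743, [(-1, -2), (1, 0), (2, 1), (1, 1), (0, 0), (1, 2)]),
  (3770, [(1, 0), (0, 0), (2, 1), (2, 1), (1, 1), (1, 2)]),
  (3771, [(1, 0), (0, 0), (2, 1), (1, 1), (1, 1), (1, 2)]),
  (3773, [(1, 0), (0, 0), (2, 1), (1, 1), (1, 2), (1, 2)]),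
  (3810, [(-1, -2), (0, 0), (1, 0), (2, 1), (1, 1), (1, 2)]),
  (3813, [(1, 0), (0, 0), (2, 1), (1, 1), (1, 1), (1, 2)]),
  (3815, [(1, 0), (0, 0), (2, 1), (1, 1), (1, 2), (1, 2)]),
  (4980, [(1, 0), (1, 0), (1, 0), (2, 1), (1, 1), (1, 1)]),
  (4983, [(1, 0), (2, 1), (2, 1), (2, 1), (1, 1), (1, 1)]),
  (4984, [(1, 0), (2, 1), (2, 1), (1, 1), (0, 0), (1, 2)]),
  (4985, [(1, 0), (2, 1), (2, 1), (1, 1), (1, 2), (0, 0)]),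
  (4986, [(1, 0), (1, 0), (0, 0), (2, 1), (1, 1), (1, 2)]),
  (4989, [(1, 0), (2, 1), (0, 0), (2, 1), (1, 1), (1, 2)]),
  (4990, [(1, 0), (2, 1), (0, 0), (1, 1), (1, 1), (1, 2)]),
  (5022, [(0, 0), (1, 0), (1, 0), (2, 1), (1, 1), (1, 2)]),
  (5025, [(-1, -1), (1, 0), (1, 0), (1, 0), (2, 1), (1, 1)]),
  (5026, [(-1, -1), (1, 0), (1, 0), (2, 1), (2, 1), (1, 1)]),
  (5027, [(1, 0), (2, 1), (2, 1), (1, 1), (1, 2), (0, 0)]),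
  (5034, [(1, 0), (1, 0), (1, 0), (2, 1), (2, 1), (1, 1)]),
  (5037, [(1, 0), (2, 1), (2, 1), (0, 0), (1, 1), (1, 2)]),
  (5038, [(1, 0), (2, 1), (2, 1), (1, 1), (0, 0), (1, 2)]),
  (5039, [(-1, -1), (1, 0), (1, 0), (2, 1), (2, 1), (1, 1)]),
  (5070, [(1, 0), (0, 0), (1, 0), (2, 1), (1, 1), (1, 2)]),
  (5073, [(1, 0), (0, 0), (2, 1), (2, 1), (1, 1), (1, 2)]),
  (5075, [(-1, -2), (0, 0), (1, 0), (2, 1), (1, 1), (1, 2)])]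

def key (i j k l v : V) : ℕ := (((i.val * 6 + j.val) * 6 + k.val) * 6 + l.val) * 6 + v.val

def wof (n : ℕ) : V → ℤ × ℤ := fun x => ((List.lookup n tbl).getD []).getD x.val (0, 0)


def Facts (p q : Finset V) (v : V) (w : V → ℤ × ℤ) : Prop :=
    (∀ a b : V, a < b → 0 ≤ dz w a b) ∧
    (∀ a b : V, dz w a b ≠ 0 ↔ Cd p q v a b) ∧
    (∃ a b : V, a < b ∧ Cd p q v a b) ∧
    (∃ a b : V, a < b ∧ CWc p q a b ∧ ¬ Cd p q v a b) ∧
    (∃ v₀ : V, (∀ x y : V, CWc p q x y → ¬ Cd p q v x y → x = v₀ ∨ y = v₀) ∧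
      (∀ b c : V, (CWc p q v₀ b ∧ ¬ Cd p q v v₀ b) →
         (CWc p q v₀ c ∧ ¬ Cd p q v v₀ c) → b ≠ c →
         ((¬ CWc p q b c ∧ ∃ a₀ : V, Cd p q v a₀ b) ∨
          (∃ w₀ : V, ¬ CWc p q v₀ w₀ ∧ v₀ ≠ w₀ ∧ w₀ ≠ b ∧ Cd p q v w₀ b))))

set_option synthInstance.maxHeartbeats 1000000 in
instance (p q : Finset V) (v : V) (w : V → ℤ × ℤ) : Decidable (Facts p q v w) := by
  unfold Facts
  refine @instDecidableAnd _ _ ?_ (@instDecidableAnd _ _ ?_ (@instDecidableAnd _ _ ?_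
    (@instDecidableAnd _ _ ?_ ?_))) <;> infer_instance

def Guard (i j k l : V) : Prop :=
  i < j ∧ k < l ∧ ¬ Interleave i j k l ∧ ({i, j} : Finset V) ≠ {k, l} ∧
    4 ≤ (supp {i, j}).card ∧ 4 ≤ (supp {k, l}).card ∧
    5 ≤ (supp {i, j} ∪ supp {k, l}).card

set_option synthInstance.maxHeartbeats 1000000 in
instance (i j k l : V) : Decidable (Guard i j k l) := by
  unfold Guard; infer_instance

set_option maxRecDepth 100000 in
set_option synthInstance.maxHeartbeats 1000000 in
set_option maxHeartbeats 40000000 in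
lemma BIG : ∀ i j k l v : V, Guard i j k l →
    v ∈ supp {i, j} → ¬ DegenerateB {i, j} {k, l} v →
    Facts {i, j} {k, l} v (wof (key i j k l v)) := by
  decide
end WLDAux


open WLD in
/-- Every non-degenerate boundary diagram of an admissible Wilson loop diagram
parametrizes a codimension-one boundary cell: its boundary positroid is a positroid,
properly contained in `B(W)`, and maximal among positroids properly contained in `B(W)`. -/
theorem statement12 (W : Finset (Finset V)) (hW : Admissible W)
    (p : Finset V) (hp : p ∈ W) (v : V) (hv : v ∈ supp p)
    (hnd : ¬ Degenerate W p v) :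
    MaxProperSub (BofB W p v) (BW W) := by
  obtain ⟨⟨hcard2, hcards⟩, hadm, hncr⟩ := hW
  obtain ⟨p₁, p₂, hne12, hWeq⟩ := Finset.card_eq_two.mp hcard2
  have hpmem : p = p₁ ∨ p = p₂ := by
    have := hp
    rw [hWeq, Finset.mem_insert, Finset.mem_singleton] at this
    exact this
  obtain ⟨q, hqW, hqp, hWpq⟩ : ∃ q, q ∈ W ∧ q ≠ p ∧ W = {p, q} := by
    rcases hpmem with rfl | rfl
    · exact ⟨p₂, by rw [hWeq]; simp, Ne.symm hne12, hWeq⟩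
    · exact ⟨p₁, by rw [hWeq]; simp, hne12, hWeq.trans (Finset.pair_comm p₁ p)⟩
  have hop : otherProp W p = q := by
    have hex : ∃ r, r ∈ W ∧ r ≠ p := ⟨q, hqW, hqp⟩
    rw [otherProp, dif_pos hex]
    have hspec := hex.choose_spec
    have hmem : hex.choose ∈ ({p, q} : Finset (Finset V)) := hWpq ▸ hspec.1
    rw [Finset.mem_insert, Finset.mem_singleton] at hmem
    exact hmem.resolve_left hspec.2
  have hcp : p.card = 2 := hcards p hp
  have hcq : q.card = 2 := hcards q hqW
  have hsp : 4 ≤ (supp p).card := by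
    have h := hadm {p} (Finset.singleton_subset_iff.mpr hp) ⟨p, Finset.mem_singleton_self p⟩
    simpa [Finset.singleton_biUnion] using h
  have hsq : 4 ≤ (supp q).card := by
    have h := hadm {q} (Finset.singleton_subset_iff.mpr hqW) ⟨q, Finset.mem_singleton_self q⟩
    simpa [Finset.singleton_biUnion] using h
  have hun : 5 ≤ (supp p ∪ supp q).card := by
    have h := hadm W le_rfl ⟨p, hp⟩
    rw [hcard2, hWpq, Finset.biUnion_insert, Finset.singleton_biUnion] at h
    simpa using h
  have hncross : ¬ Crossing p q := hncr p hp q hqW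
  obtain ⟨i, j, hij, hpij⟩ : ∃ i j : V, i < j ∧ p = {i, j} := by
    obtain ⟨x, y, hxy, hxyp⟩ := Finset.card_eq_two.mp hcp
    rcases lt_or_gt_of_ne hxy with h | h
    · exact ⟨x, y, h, hxyp⟩
    · exact ⟨y, x, h, hxyp.trans (Finset.pair_comm x y)⟩
  obtain ⟨k, l, hkl, hqkl⟩ : ∃ k l : V, k < l ∧ q = {k, l} := by
    obtain ⟨x, y, hxy, hxyq⟩ := Finset.card_eq_two.mp hcq
    rcases lt_or_gt_of_ne hxy with h | h
    · exact ⟨x, y, h, hxyq⟩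
    · exact ⟨y, x, h, hxyq.trans (Finset.pair_comm x y)⟩
  subst hpij
  subst hqkl
  unfold Degenerate at hnd
  rw [hop] at hnd
  have hguard : WLDAux.Guard i j k l := by
    refine ⟨hij, hkl, ?_, ?_, hsp, hsq, hun⟩
    · exact fun h => hncross ((WLDAux.crossing_iff hij hkl).mpr h)
    · exact fun h => hqp (h.symm)
  obtain ⟨h1, h2, hne, hprop, v₀, hcom, H3⟩ := WLDAux.BIG i j k l v hguard hv hnd
  have hBofB : BofB W {i, j} v = BofBd {i, j} {k, l} v := by
    unfold BofB
    rw [hop]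
  rw [hBofB, hWpq]
  exact WLDAux.master _ _ (WLDAux.Cd {i, j} {k, l} v) (WLDAux.CWc {i, j} {k, l})
    (Set.ext fun I => WLDAux.mem_BofBd_iff _ _ _ I)
    (Set.ext fun I => WLDAux.mem_BW_iff (Ne.symm hqp) I)
    (fun a b h => WLDAux.Cd_symm h) (fun a b h => WLDAux.CWc_symm h)
    (fun a b h => WLDAux.Cd_sub_CWc h) (fun a b h => WLDAux.CWc_ne h)
    (WLDAux.wof (WLDAux.key i j k l v)) h1 h2 hne hprop v₀ hcom H3
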